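/- Let F be a field of characteristic not 2, a ∈ Fˣ a non-square, and K = F(√a). Then the set of nonzero elements of F that are sums of two squares in K equals the set of nonzero products x·y where x ∈ F is a sum of two squares of F and y ∈ F is of the form c² + a·d² with c, d ∈ F; i.e. (K² + K²) ∩ Fˣ = ((F² + F²)·(F² + aF²)) ∩ Fˣ. -/

import Mathlib

/-- For a quadratic extension K = F(√a) of a field F of characteristic not 2 (a a
non-square), a nonzero element x of F is a sum of two squares in K iff
x = (c² + d²)·(e² + a·f²) for some c, d, e, f ∈ F. -/
theorem sum_two_squares_quadratic_ext {F K : Type*} [Field F] [Field K] [Algebra F K]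
    (hchar : (2 : F) ≠ 0) (a : F) (ha : a ≠ 0) (hns : ¬ ∃ y : F, y ^ 2 = a)
    (r : K) (hr : r ^ 2 = algebraMap F K a)
    (hgen : ∀ x : K, ∃ c d : F, x = algebraMap F K c + algebraMap F K d * r) :
    ∀ x : F, x ≠ 0 →
      ((∃ α β : K, algebraMap F K x = α ^ 2 + β ^ 2) ↔
        ∃ c d e f : F, x = (c ^ 2 + d ^ 2) * (e ^ 2 + a * f ^ 2)) := by
  have hinj : Function.Injective (algebraMap F K) := (algebraMap F K).injective
  -- linear independence of 1, r over F
  have hind : ∀ p q : F, algebraMap F K p + algebraMap F K q * r = 0 → p = 0 ∧ q = 0 := by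
    intro p q h
    by_cases hq : q = 0
    · subst hq
      simp only [map_zero, zero_mul, add_zero] at h
      exact ⟨hinj (by simpa using h), rfl⟩
    · exfalso
      apply hns
      refine ⟨-p / q, ?_⟩
      have hq' : algebraMap F K q ≠ 0 := fun h0 => hq (hinj (by simpa using h0))
      have hrv : r = algebraMap F K (-p) / algebraMap F K q := by
        rw [eq_div_iff hq', map_neg]
        linear_combination h
      apply hinj
      rw [map_pow, map_div₀, ← hrv, hr]
  intro x hx
  constructor
  · rintro ⟨α, β, hab⟩
    obtain ⟨c₁, d₁, hα⟩ := hgen α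
    obtain ⟨c₂, d₂, hβ⟩ := hgen β
    subst hα hβ
    have key : algebraMap F K (c₁ ^ 2 + c₂ ^ 2 + a * (d₁ ^ 2 + d₂ ^ 2) - x)
        + algebraMap F K (2 * (c₁ * d₁ + c₂ * d₂)) * r = 0 := by
      simp only [map_add, map_sub, map_mul, map_pow, map_ofNat]
      linear_combination -hab - (algebraMap F K d₁ ^ 2 + algebraMap F K d₂ ^ 2) * hr
    obtain ⟨h1, h2⟩ := hind _ _ key
    have hxval : x = c₁ ^ 2 + c₂ ^ 2 + a * (d₁ ^ 2 + d₂ ^ 2) := by linear_combination -h1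
    have hcd : c₁ * d₁ + c₂ * d₂ = 0 := by
      rcases mul_eq_zero.mp h2 with h | h
      · exact absurd h hchar
      · exact h
    by_cases hN : d₁ ^ 2 + d₂ ^ 2 = 0
    · by_cases hd : d₁ = 0 ∧ d₂ = 0
      · exact ⟨c₁, c₂, 1, 0, by rw [hxval, hd.1, hd.2]; ring⟩
      · -- -1 is a square, so every element is a sum of two squares
        have hi : ∃ i : F, i ^ 2 = -1 := by
          rcases not_and_or.mp hd with h | h
          · exact ⟨d₂ / d₁, by field_simp; linear_combination hN⟩
          · exact ⟨d₁ / d₂, by field_simp; linear_combination hN⟩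
        obtain ⟨i, hi⟩ := hi
        refine ⟨(x + 1) / 2, i * ((x - 1) / 2), 1, 0, ?_⟩
        field_simp
        linear_combination (norm := ring) -((x - 1) ^ 2) * hi
    · refine ⟨d₁ / (d₁ ^ 2 + d₂ ^ 2), d₂ / (d₁ ^ 2 + d₂ ^ 2),
        c₁ * d₂ - c₂ * d₁, d₁ ^ 2 + d₂ ^ 2, ?_⟩
      have key2 : x * (d₁ ^ 2 + d₂ ^ 2) ^ 2 =
          (d₁ ^ 2 + d₂ ^ 2) * ((c₁ * d₂ - c₂ * d₁) ^ 2 + a * (d₁ ^ 2 + d₂ ^ 2) ^ 2) := by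
        rw [hxval]
        linear_combination ((d₁ ^ 2 + d₂ ^ 2) * (c₁ * d₁ + c₂ * d₂)) * hcd
      field_simp
      linear_combination (d₁ ^ 2 + d₂ ^ 2) * hxval + (c₁ * d₁ + c₂ * d₂) * hcd
  · rintro ⟨c, d, e, f, rfl⟩
    refine ⟨algebraMap F K c * algebraMap F K e - algebraMap F K d * algebraMap F K f * r,
      algebraMap F K c * algebraMap F K f * r + algebraMap F K d * algebraMap F K e, ?_⟩
    simp only [map_add, map_mul, map_pow]
    linear_combination -(algebraMap F K c ^ 2 + algebraMap F K d ^ 2) * algebraMap F K f ^ 2 * hr
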